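/- On M_r, the vector field ξ = -N × ν (where N is the position vector and × the octonion cross product) equals (1/√(1-r²))(x₆e₁ + x₅e₂ + x₄e₃ - x₃e₄ - x₂e₅ - x₁e₆), and ξ is a unit vector field tangent to M_r orthogonal to ν. -/

import Mathlib

/- Common setup: ℝ⁷ ≅ pure imaginary octonions 𝔆₊ (0-based indices: eᵢ ↦ i-1),
   octonion cross product x × y = xy + ⟨x,y⟩·1 given by the Fano triples
   (e₁e₂=e₃, e₁e₄=e₅, e₁e₆=e₇, e₂e₅=e₇, e₃e₄=e₇, e₃e₅=e₆, e₂e₆=e₄),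
   the hypersurfaces M_r = S⁶ ∩ {x₇ = r}, the unit normal ν of M_r in S⁶,
   the vector field ξ = -N × ν, its dual 1-form η and dη
   (with the convention dη(X,Y) = ½(Xη(Y) - Yη(X) - η([X,Y]))). -/

noncomputable section

open scoped RealInnerProductSpace

abbrev E7 : Type := EuclideanSpace ℝ (Fin 7)
abbrev E6 : Type := EuclideanSpace ℝ (Fin 6)

/-- Octonion cross product on pure imaginary octonions 𝔆₊ ≅ ℝ⁷. -/
def cross (u v : E7) : E7 := WithLp.toLp 2 fun k =>
  if k = 0 then u 1 * v 2 - u 2 * v 1 + (u 3 * v 4 - u 4 * v 3) + (u 5 * v 6 - u 6 * v 5)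
  else if k = 1 then u 2 * v 0 - u 0 * v 2 + (u 4 * v 6 - u 6 * v 4) + (u 5 * v 3 - u 3 * v 5)
  else if k = 2 then u 0 * v 1 - u 1 * v 0 + (u 3 * v 6 - u 6 * v 3) + (u 4 * v 5 - u 5 * v 4)
  else if k = 3 then u 4 * v 0 - u 0 * v 4 + (u 6 * v 2 - u 2 * v 6) + (u 1 * v 5 - u 5 * v 1)
  else if k = 4 then u 0 * v 3 - u 3 * v 0 + (u 6 * v 1 - u 1 * v 6) + (u 5 * v 2 - u 2 * v 5)
  else if k = 5 then u 6 * v 0 - u 0 * v 6 + (u 2 * v 4 - u 4 * v 2) + (u 3 * v 1 - u 1 * v 3)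
  else u 0 * v 5 - u 5 * v 0 + (u 1 * v 4 - u 4 * v 1) + (u 2 * v 3 - u 3 * v 2)

/-- The hypersurface M_r = S⁶ ∩ {x₇ = r} = {Σᵢ₌₁⁶ xᵢeᵢ + re₇ : Σᵢ₌₁⁶ xᵢ² = 1 - r²}. -/
def Mr (r : ℝ) : Set E7 := {x | x 6 = r ∧ ∑ i : Fin 6, x i.castSucc ^ 2 = 1 - r ^ 2}

/-- The unit normal ν of M_r in S⁶ : ν_x = (r/√(1-r²)) Σᵢ₌₁⁶ xᵢeᵢ - √(1-r²) e₇. -/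
def nu (r : ℝ) (x : E7) : E7 := WithLp.toLp 2 fun i =>
  if i = 6 then -Real.sqrt (1 - r ^ 2) else (r / Real.sqrt (1 - r ^ 2)) * x i

/-- ξ = -N × ν = (1/√(1-r²))(x₆e₁ + x₅e₂ + x₄e₃ - x₃e₄ - x₂e₅ - x₁e₆). -/
def xi (r : ℝ) (x : E7) : E7 := WithLp.toLp 2 fun i =>
  (1 / Real.sqrt (1 - r ^ 2)) *
    (if i = 0 then x 5 else if i = 1 then x 4 else if i = 2 then x 3
     else if i = 3 then -x 2 else if i = 4 then -x 1 else if i = 5 then -x 0 else 0)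

/-- The 1-form η dual to ξ:
η = (1/√(1-r²))(x₆dx₁ + x₅dx₂ + x₄dx₃ - x₃dx₄ - x₂dx₅ - x₁dx₆). -/
def eta (r : ℝ) (x v : E7) : ℝ :=
  (1 / Real.sqrt (1 - r ^ 2)) *
    (x 5 * v 0 + x 4 * v 1 + x 3 * v 2 - x 2 * v 3 - x 1 * v 4 - x 0 * v 5)

/-- dη = -(2/√(1-r²))(dx₁∧dx₆ + dx₂∧dx₅ + dx₃∧dx₄), with the convention
dη(X,Y) = ½(Xη(Y) - Yη(X) - η([X,Y])), i.e. (dxᵢ∧dxⱼ)(u,v) = ½(uᵢvⱼ - uⱼvᵢ). -/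
def deta (r : ℝ) (u v : E7) : ℝ :=
  -(1 / Real.sqrt (1 - r ^ 2)) *
    (u 0 * v 5 - u 5 * v 0 + (u 1 * v 4 - u 4 * v 1) + (u 2 * v 3 - u 3 * v 2))

/-- The tangent space T_xM_r = {v : v₇ = 0, ⟨v,x⟩ = 0} (as a predicate). -/
def TangentMr (x v : E7) : Prop := v 6 = 0 ∧ ⟪v, x⟫ = 0

set_option maxHeartbeats 4000000 in
/-- on M_r, the vector field ξ = -N × ν equals
(1/√(1-r²))(x₆e₁ + x₅e₂ + x₄e₃ - x₃e₄ - x₂e₅ - x₁e₆), and ξ is a unit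
vector field tangent to M_r (v₇ = 0 and ⟨ξ,x⟩ = 0) orthogonal to ν. -/
theorem stmt7 (r : ℝ) (hr : -1 < r ∧ r < 1) (x : E7) (hx : x ∈ Mr r) :
    -cross x (nu r x) = xi r x ∧ ‖xi r x‖ = 1 ∧
    ⟪xi r x, nu r x⟫ = 0 ∧ TangentMr x (xi r x) := by
  obtain ⟨hx6, hsum⟩ := hx
  have h1 : (0:ℝ) < 1 - r ^ 2 := by nlinarith [hr.1, hr.2]
  have hs0 : 0 < Real.sqrt (1 - r ^ 2) := Real.sqrt_pos.mpr h1
  have hs2 : Real.sqrt (1 - r ^ 2) ^ 2 = 1 - r ^ 2 := Real.sq_sqrt h1.le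
  have hsne : Real.sqrt (1 - r ^ 2) ≠ 0 := ne_of_gt hs0
  have hsum6 : x 0 ^ 2 + x 1 ^ 2 + x 2 ^ 2 + x 3 ^ 2 + x 4 ^ 2 + x 5 ^ 2 = 1 - r ^ 2 := by
    rw [Fin.sum_univ_six] at hsum
    convert hsum using 2 <;> rfl
  refine ⟨?_, ?_, ?_, ?_, ?_⟩
  · ext i
    fin_cases i
    · show -(cross x (nu r x) 0) = xi r x 0
      simp only [cross, nu, xi, hx6, WithLp.ofLp_toLp, Fin.isValue, Fin.reduceEq, reduceIte]
      field_simp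
      linear_combination x 5 * hs2
    · show -(cross x (nu r x) 1) = xi r x 1
      simp only [cross, nu, xi, hx6, WithLp.ofLp_toLp, Fin.isValue, Fin.reduceEq, reduceIte]
      field_simp
      linear_combination x 4 * hs2
    · show -(cross x (nu r x) 2) = xi r x 2
      simp only [cross, nu, xi, hx6, WithLp.ofLp_toLp, Fin.isValue, Fin.reduceEq, reduceIte]
      field_simp
      linear_combination x 3 * hs2
    · show -(cross x (nu r x) 3) = xi r x 3
      simp only [cross, nu, xi, hx6, WithLp.ofLp_toLp, Fin.isValue, Fin.reduceEq, reduceIte]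
      field_simp
      linear_combination (-(x 2)) * hs2
    · show -(cross x (nu r x) 4) = xi r x 4
      simp only [cross, nu, xi, hx6, WithLp.ofLp_toLp, Fin.isValue, Fin.reduceEq, reduceIte]
      field_simp
      linear_combination (-(x 1)) * hs2
    · show -(cross x (nu r x) 5) = xi r x 5
      simp only [cross, nu, xi, hx6, WithLp.ofLp_toLp, Fin.isValue, Fin.reduceEq, reduceIte]
      field_simp
      linear_combination (-(x 0)) * hs2
    · show -(cross x (nu r x) 6) = xi r x 6
      simp only [cross, nu, xi, hx6, WithLp.ofLp_toLp, Fin.isValue, Fin.reduceEq, reduceIte]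
      ring
  · have hn : ‖xi r x‖ ^ 2 = 1 := by
      rw [← real_inner_self_eq_norm_sq]
      rw [show (inner ℝ (xi r x) (xi r x) : ℝ) = ∑ i : Fin 7, xi r x i * xi r x i from by
        simp only [PiLp.inner_apply, RCLike.inner_apply', conj_trivial]]
      rw [Fin.sum_univ_seven]
      simp only [xi, WithLp.ofLp_toLp, Fin.isValue, Fin.reduceEq, reduceIte]
      field_simp
      linear_combination hsum6 - hs2
    nlinarith [norm_nonneg (xi r x), hn]
  · rw [show (inner ℝ (xi r x) (nu r x) : ℝ) = ∑ i : Fin 7, xi r x i * nu r x i from by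
      simp only [PiLp.inner_apply, RCLike.inner_apply', conj_trivial]]
    rw [Fin.sum_univ_seven]
    simp only [xi, nu, WithLp.ofLp_toLp, Fin.isValue, Fin.reduceEq, reduceIte]
    ring
  · show xi r x 6 = 0
    simp [xi]
  · rw [show (inner ℝ (xi r x) x : ℝ) = ∑ i : Fin 7, xi r x i * x i from by
      simp only [PiLp.inner_apply, RCLike.inner_apply', conj_trivial]]
    rw [Fin.sum_univ_seven]
    simp only [xi, WithLp.ofLp_toLp, Fin.isValue, Fin.reduceEq, reduceIte]
    ring
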